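/- For the generalized Kulish–Sklyanin matrix R₁₂(q) on ℂᵏ⊗ℂᵏ, the identity q^{1/2} R₁₂ − q^{-1/2} R₁₂^{-T} = (q − q^{-1}) P₁₂ holds, where P₁₂ = Σ_{i,j} e_{ij}⊗e_{ji} is the permutation operator and R₁₂^{-T} denotes the inverse of the transpose of R₁₂. -/

import Mathlib

open Matrix

/-- The generalized Kulish–Sklyanin R-matrix on `ℂ^k ⊗ ℂ^k`, in terms of `s = q^{1/2}`. -/
noncomputable def KS (k : ℕ) (s : ℂ) : Matrix (Fin k × Fin k) (Fin k × Fin k) ℂ :=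
  fun p q =>
    (if p = q then s⁻¹ else 0) +
    (if p = q ∧ p.1 = p.2 then s - s⁻¹ else 0) +
    (if p.1 < p.2 ∧ q.1 = p.2 ∧ q.2 = p.1 then s - s⁻¹ ^ 3 else 0)

/-- The permutation operator `P₁₂ = Σ_{i,j} e_{ij} ⊗ e_{ji}` on `ℂ^k ⊗ ℂ^k`. -/
def Pmat (k : ℕ) : Matrix (Fin k × Fin k) (Fin k × Fin k) ℂ :=
  fun p q => if p.1 = q.2 ∧ p.2 = q.1 then 1 else 0

set_option maxHeartbeats 1000000 in
/-- Closed formula for a column of `KS`. -/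
lemma col_KS (k : ℕ) (s : ℂ) (p q : Fin k × Fin k) :
    KS k s q p = (if q = p then (if p.1 = p.2 then s else s⁻¹) else 0) +
      (if q = (p.2, p.1) then (if p.2 < p.1 then s - s⁻¹ ^ 3 else 0) else 0) := by
  obtain ⟨p1, p2⟩ := p
  obtain ⟨q1, q2⟩ := q
  simp only [KS, Prod.mk.injEq]
  split_ifs <;> try ring
  all_goals try (field_simp; try ring)
  all_goals (exfalso; simp only [Prod.mk.injEq, Fin.lt_def, Fin.ext_iff] at *; omega)

set_option maxHeartbeats 1000000 in
/-- Closed formula for a row of the candidate inverse of `(KS k s)ᵀ`. -/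
lemma rowB (k : ℕ) (s : ℂ) (hs : s ≠ 0) (q r : Fin k × Fin k) :
    (s ^ 2 • KS k s - (s ^ 3 - s⁻¹) • Pmat k) q r =
      (if q = r then (if q.1 = q.2 then s⁻¹ else s) else 0) +
      (if q.2 < q.1 ∧ r = (q.2, q.1) then -(s ^ 3 - s⁻¹) else 0) := by
  obtain ⟨q1, q2⟩ := q
  obtain ⟨r1, r2⟩ := r
  simp only [KS, Pmat, Matrix.sub_apply, Matrix.smul_apply, smul_eq_mul, Prod.mk.injEq]
  split_ifs <;> try ring
  all_goals try (field_simp; try ring)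
  all_goals (exfalso; simp only [Prod.mk.injEq, Fin.lt_def, Fin.ext_iff] at *; omega)

set_option maxHeartbeats 1000000 in
/-- `s^2 • KS k s - (s^3 - s⁻¹) • Pmat k` is a right inverse of `(KS k s)ᵀ`. -/
lemma keymul (k : ℕ) (s : ℂ) (hs : s ≠ 0) :
    (KS k s)ᵀ * (s ^ 2 • KS k s - (s ^ 3 - s⁻¹) • Pmat k) = 1 := by
  ext p r
  rw [mul_apply]
  simp only [transpose_apply, col_KS, add_mul, ite_mul, zero_mul]
  rw [Finset.sum_add_distrib]
  simp only [Finset.sum_ite_eq', Finset.mem_univ, if_true]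
  rw [rowB k s hs, rowB k s hs]
  obtain ⟨p1, p2⟩ := p
  obtain ⟨r1, r2⟩ := r
  simp only [one_apply, Prod.mk.injEq]
  split_ifs <;> try ring
  all_goals try (field_simp; try ring)
  all_goals (exfalso; simp only [Prod.mk.injEq, Fin.lt_def, Fin.ext_iff] at *; omega)

/-- For the generalized Kulish–Sklyanin matrix `R₁₂(q)` on `ℂ^k⊗ℂ^k`
(with `s = q^{1/2}` nonzero), the identity
`q^{1/2} R₁₂ − q^{-1/2} R₁₂^{-T} = (q − q^{-1}) P₁₂` holds, where `R^{-T}` is the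
inverse of the transpose of `R` and `P₁₂` the permutation operator. -/
theorem KS_skein (k : ℕ) (s : ℂ) (hs : s ≠ 0) :
    s • KS k s - s⁻¹ • ((KS k s)ᵀ)⁻¹ = (s ^ 2 - (s ^ 2)⁻¹) • Pmat k := by
  have hinv : ((KS k s)ᵀ)⁻¹ = s ^ 2 • KS k s - (s ^ 3 - s⁻¹) • Pmat k :=
    inv_eq_right_inv (keymul k s hs)
  rw [hinv, smul_sub, smul_smul, smul_smul]
  have h1 : s⁻¹ * s ^ 2 = s := by field_simp
  have h2 : s⁻¹ * (s ^ 3 - s⁻¹) = s ^ 2 - (s ^ 2)⁻¹ := by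
    field_simp
  rw [h1, h2]
  abel
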